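/- arXiv:2108.07427 — 6 statements merged into one kernel-verified Lean document; each statement's English description precedes it below -/
import Mathlib

section
/- The following four statements are equivalent: (1) there exists a self-dual 2-quasi-FG code, i.e., an FG-submodule C of (FG)² with C = C^⊥; (2) there exists a self-dual 2-quasi-FG code of type I, i.e., an element b ∈ FG with b·b̄ = −1, so that C_{1,b} = {(u, ub) : u ∈ FG} is self-dual; (3) −1 is a square element of F; (4) either q is even, or 4 divides q − 1. -/
open scoped Classical

noncomputable section

/-- The "bar" map on the group algebra: `Σ aₓ x ↦ Σ aₓ x⁻¹`. -/
def bar {F : Type} [Field F] {G : Type} [CommGroup G] (a : MonoidAlgebra F G) :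
    MonoidAlgebra F G :=
  MonoidAlgebra.ofCoeff (Finsupp.mapDomain (fun x => x⁻¹) a.coeff)

/-- The euclidean inner product on the group algebra. -/
def inn {F : Type} [Field F] {G : Type} [CommGroup G] [Fintype G]
    (a b : MonoidAlgebra F G) : F :=
  ∑ x : G, a.coeff x * b.coeff x

/-- The euclidean inner product on `(FG)²`. -/
def inn2 {F : Type} [Field F] {G : Type} [CommGroup G] [Fintype G]
    (u v : MonoidAlgebra F G × MonoidAlgebra F G) : F :=
  inn u.1 v.1 + inn u.2 v.2

/-- The Hamming weight of an element of `(FG)²` (number of nonzero coordinates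
among its `2n` coordinates). -/
def wt {F : Type} [Field F] {G : Type} [CommGroup G] [Fintype G]
    (u : MonoidAlgebra F G × MonoidAlgebra F G) : ℕ :=
  (Finset.univ.filter fun x : G => u.1.coeff x ≠ 0).card +
    (Finset.univ.filter fun x : G => u.2.coeff x ≠ 0).card

/-- The 2-quasi-abelian code generated by `(a,b)`: `C_{a,b} = {(ua, ub) : u ∈ FG}`. -/
def code {F : Type} [Field F] {G : Type} [CommGroup G]
    (a b : MonoidAlgebra F G) :
    Submodule (MonoidAlgebra F G) (MonoidAlgebra F G × MonoidAlgebra F G) :=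
  LinearMap.range
    ((LinearMap.mulRight (MonoidAlgebra F G) a).prod
      (LinearMap.mulRight (MonoidAlgebra F G) b))

/-- The dual (orthogonal complement) of a `2`-quasi-abelian code, as a set. -/
def dualSet {F : Type} [Field F] {G : Type} [CommGroup G] [Fintype G]
    (C : Submodule (MonoidAlgebra F G) (MonoidAlgebra F G × MonoidAlgebra F G)) :
    Set (MonoidAlgebra F G × MonoidAlgebra F G) :=
  {v | ∀ c ∈ C, inn2 v c = 0}

/-- A `2`-quasi-abelian code is self-dual if it equals its orthogonal complement. -/
def IsSelfDualCode {F : Type} [Field F] {G : Type} [CommGroup G] [Fintype G]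
    (C : Submodule (MonoidAlgebra F G) (MonoidAlgebra F G × MonoidAlgebra F G)) : Prop :=
  (C : Set (MonoidAlgebra F G × MonoidAlgebra F G)) = dualSet C

/-- A `2`-quasi-abelian code is self-orthogonal if `⟨u,v⟩ = 0` for all `u, v` in it. -/
def IsSelfOrthCode {F : Type} [Field F] {G : Type} [CommGroup G] [Fintype G]
    (C : Submodule (MonoidAlgebra F G) (MonoidAlgebra F G × MonoidAlgebra F G)) : Prop :=
  ∀ u ∈ C, ∀ v ∈ C, inn2 u v = 0

/-- The minimum Hamming weight of the nonzero elements of a code. -/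
def minwt {F : Type} [Field F] {G : Type} [CommGroup G] [Fintype G]
    (C : Submodule (MonoidAlgebra F G) (MonoidAlgebra F G × MonoidAlgebra F G)) : ℕ :=
  sInf {k | ∃ v ∈ C, v ≠ 0 ∧ wt v = k}

/-- `μ_q(n)`: the minimal size of a nontrivial `q`-cyclotomic coset of `ℤ/nℤ`. -/
def mu (q n : ℕ) : ℕ :=
  sInf {k | ∃ a : ZMod n, a ≠ 0 ∧
    k = Nat.card {b : ZMod n | ∃ j : ℕ, b = a * (q : ZMod n) ^ j}}

/-- The `q`-entropy function. -/
def entropy (q : ℕ) (δ : ℝ) : ℝ :=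
  δ * Real.logb q (q - 1) - δ * Real.logb q δ - (1 - δ) * Real.logb q (1 - δ)

/-- A primitive idempotent of a commutative ring. -/
def IsPrimIdem {A : Type} [CommRing A] (e : A) : Prop :=
  IsIdempotentElem e ∧ e ≠ 0 ∧
    ¬ ∃ e' e'' : A, IsIdempotentElem e' ∧ IsIdempotentElem e'' ∧
      e' ≠ 0 ∧ e'' ≠ 0 ∧ e' * e'' = 0 ∧ e = e' + e''

/-- The principal idempotent `e₀ = n⁻¹ Σ_{x∈G} x`. -/
def eZero (F : Type) [Field F] (G : Type) [CommGroup G] [Fintype G] : MonoidAlgebra F G :=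
  ((Fintype.card G : F)⁻¹) • ∑ x : G, MonoidAlgebra.single x (1 : F)

/-- `F`-dimension of an `FG`-submodule of `(FG)²`. -/
def fdim2 (F : Type) [Field F] {G : Type} [CommGroup G]
    (C : Submodule (MonoidAlgebra F G) (MonoidAlgebra F G × MonoidAlgebra F G)) : ℕ :=
  Module.finrank F (Submodule.restrictScalars F C)

/-- `F`-dimension of an ideal of `FG`. -/
def fdim (F : Type) [Field F] {G : Type} [CommGroup G]
    (A : Ideal (MonoidAlgebra F G)) : ℕ :=
  Module.finrank F (Submodule.restrictScalars F A)


section aux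
variable {F : Type} [Field F] {G : Type} [CommGroup G] [Fintype G]

lemma malg_smul_apply (α : F) (x : MonoidAlgebra F G) (g : G) : (α • x).coeff g = α * x.coeff g := rfl

lemma inn_smul_left (α : F) (x y : MonoidAlgebra F G) : inn (α • x) y = α * inn x y := by
  simp [inn, malg_smul_apply, Finset.mul_sum, mul_assoc]

lemma inn_smul_right (α : F) (x y : MonoidAlgebra F G) : inn x (α • y) = α * inn x y := by
  simp only [inn, malg_smul_apply, Finset.mul_sum]
  exact Finset.sum_congr rfl fun _ _ => by ring

lemma inn_single_right (x : MonoidAlgebra F G) (g : G) (r : F) :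
    inn x (MonoidAlgebra.single g r) = x.coeff g * r := by
  simp [inn, Finsupp.single_apply, mul_ite]

/-- the all-ones element -/
def sAll (F : Type) [Field F] (G : Type) [CommGroup G] [Fintype G] : MonoidAlgebra F G :=
  ∑ x : G, MonoidAlgebra.single x (1 : F)

lemma sAll_apply (y : G) : (sAll F G).coeff y = 1 := by
  rw [sAll, MonoidAlgebra.coeff_sum, Finset.sum_apply']
  simp [Finsupp.single_apply]

lemma sAll_mul (a : MonoidAlgebra F G) : sAll F G * a = (∑ x : G, a.coeff x) • sAll F G := by
  ext y
  rw [malg_smul_apply, sAll_apply, mul_one]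
  rw [sAll, Finset.sum_mul, MonoidAlgebra.coeff_sum, Finset.sum_apply']
  simp only [MonoidAlgebra.coeff_single_mul_apply, one_mul]
  exact Fintype.sum_equiv ((Equiv.inv G).trans (Equiv.mulRight y)) _ _ (fun x => rfl)

lemma inn_sAll_left (a : MonoidAlgebra F G) : inn (sAll F G) a = ∑ x : G, a.coeff x := by
  simp [inn, sAll_apply]

lemma mem_code {a b v} :
    v ∈ code a b ↔ ∃ u : MonoidAlgebra F G, u * a = v.1 ∧ u * b = v.2 := by
  simp [code, LinearMap.mem_range, LinearMap.prod_apply, LinearMap.mulRight_apply,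
    Prod.ext_iff, Pi.prod]

lemma code_to_sq (hnF : (Fintype.card G : F) ≠ 0)
    (C : Submodule (MonoidAlgebra F G) (MonoidAlgebra F G × MonoidAlgebra F G))
    (hC : IsSelfDualCode C) : IsSquare (-1 : F) := by
  have key : ∀ v ∈ C, ∀ w ∈ C,
      (∑ x : G, v.1.coeff x) * (∑ x : G, w.1.coeff x) + (∑ x : G, v.2.coeff x) * (∑ x : G, w.2.coeff x) = 0 := by
    intro v hv w hw
    have hsv : sAll F G • v ∈ C := C.smul_mem _ hv
    have hd : (sAll F G • v) ∈ dualSet C := hC ▸ hsv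
    have := hd w hw
    simpa [inn2, Prod.smul_fst, Prod.smul_snd, smul_eq_mul, sAll_mul,
      inn_smul_left, inn_sAll_left] using this
  have exv : ∃ v ∈ C, ¬((∑ x : G, v.1.coeff x) = 0 ∧ (∑ x : G, v.2.coeff x) = 0) := by
    by_contra hall
    push_neg at hall
    have hm : ((sAll F G, 0) : MonoidAlgebra F G × MonoidAlgebra F G) ∈ dualSet C := by
      intro c hc
      have h1 := (hall c hc).1
      simp [inn2, inn, sAll_apply, h1]
    have hmC : ((sAll F G, 0) : MonoidAlgebra F G × MonoidAlgebra F G) ∈ C := by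
      rw [← SetLike.mem_coe, hC]; exact hm
    have := (hall _ hmC).1
    simp only [sAll_apply] at this
    simp at this
    exact hnF (by simpa using this)
  obtain ⟨v, hv, hne⟩ := exv
  set A := ∑ x : G, v.1.coeff x
  set B := ∑ x : G, v.2.coeff x
  have hk : A * A + B * B = 0 := key v hv v hv
  by_cases hB : B = 0
  · exfalso
    rw [hB, mul_zero, add_zero, mul_self_eq_zero] at hk
    exact hne ⟨hk, hB⟩
  · refine ⟨A * B⁻¹, ?_⟩
    field_simp
    linear_combination -hk

lemma sq_to_code (c : F) (hc : c * c = -1) :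
    ∃ b : MonoidAlgebra F G, b * bar b = -1 ∧ IsSelfDualCode (code 1 b) := by
  set b : MonoidAlgebra F G := MonoidAlgebra.single 1 c with hb
  have hbar : bar b = b := by
    simp [bar, hb, MonoidAlgebra.coeff_single, Finsupp.mapDomain_single]
  have hmul : ∀ u : MonoidAlgebra F G, u * b = c • u := by
    intro u
    ext g
    simp [hb, MonoidAlgebra.coeff_mul_single_one, malg_smul_apply, mul_comm]
  refine ⟨b, ?_, ?_⟩
  · rw [hbar, hb, MonoidAlgebra.single_mul_single, one_mul, hc]
    simp [← MonoidAlgebra.one_def, MonoidAlgebra.single_neg]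
  · apply Set.ext
    intro v
    constructor
    · intro hv c' hc'
      obtain ⟨u, hu1, hu2⟩ := mem_code.mp hv
      obtain ⟨w, hw1, hw2⟩ := mem_code.mp hc'
      rw [mul_one] at hu1 hw1
      rw [hmul] at hu2 hw2
      rw [inn2, ← hu1, ← hu2, ← hw1, ← hw2, inn_smul_left, inn_smul_right, ← mul_assoc,
        hc]
      ring
    · intro hv
      have hcoord : ∀ g : G, v.1.coeff g + c * v.2.coeff g = 0 := by
        intro g
        have hm : (MonoidAlgebra.single g (1:F), MonoidAlgebra.single g (1:F) * b) ∈
            code (1 : MonoidAlgebra F G) b :=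
          mem_code.mpr ⟨MonoidAlgebra.single g 1, by simp⟩
        have := hv _ hm
        rw [inn2, hmul, inn_smul_right, inn_single_right, inn_single_right] at this
        simp only [mul_one] at this
        linear_combination this
      refine mem_code.mpr ⟨(-c) • v.2, ?_, ?_⟩
      · rw [mul_one]
        ext g
        rw [malg_smul_apply]
        linear_combination -hcoord g
      · rw [hmul, smul_smul]
        have : c * -c = 1 := by rw [mul_neg, hc]; ring
        rw [this, one_smul]

lemma card_cast_ne_zero (F : Type) [Field F] [Fintype F] (G : Type) [CommGroup G] [Fintype G]
    (hcop : Nat.Coprime (Fintype.card G) (Fintype.card F)) :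
    (Fintype.card G : F) ≠ 0 := by
  have hchar : CharP F (ringChar F) := ringChar.charP F
  have hprime : (ringChar F).Prime := CharP.char_is_prime F (ringChar F)
  rw [Ne, CharP.cast_eq_zero_iff F (ringChar F)]
  intro hdvd
  have h2 : ringChar F ∣ Fintype.card F := by
    rw [← CharP.cast_eq_zero_iff F (ringChar F)]
    exact FiniteField.cast_card_eq_zero F
  have : ringChar F ∣ 1 := hcop ▸ Nat.dvd_gcd hdvd h2
  exact hprime.ne_one (Nat.dvd_one.mp this)

end aux

/-- The following are equivalent: (1) a self-dual 2-quasi-`FG` code exists;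
(2) a self-dual 2-quasi-`FG` code of type I exists, i.e. there is `b ∈ FG` with
`b·b̄ = -1` (so that `C_{1,b}` is self-dual); (3) `-1` is a square in `F`;
(4) `q` is even or `4 ∣ q - 1`. -/
theorem stmt_2 (F : Type) [Field F] [Fintype F] (G : Type) [CommGroup G] [Fintype G]
    (hn : 1 < Fintype.card G) (hodd : Odd (Fintype.card G))
    (hcop : Nat.Coprime (Fintype.card G) (Fintype.card F)) :
    ((∃ C : Submodule (MonoidAlgebra F G) (MonoidAlgebra F G × MonoidAlgebra F G),
        IsSelfDualCode C) ↔
      (∃ b : MonoidAlgebra F G, b * bar b = -1 ∧ IsSelfDualCode (code 1 b))) ∧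
    ((∃ b : MonoidAlgebra F G, b * bar b = -1 ∧ IsSelfDualCode (code 1 b)) ↔
      IsSquare (-1 : F)) ∧
    (IsSquare (-1 : F) ↔
      (Even (Fintype.card F) ∨ 4 ∣ (Fintype.card F - 1))) := by
  have hq : 1 < Fintype.card F := Fintype.one_lt_card
  have hnF : (Fintype.card G : F) ≠ 0 := card_cast_ne_zero F G hcop
  have h13 : (∃ C : Submodule (MonoidAlgebra F G) (MonoidAlgebra F G × MonoidAlgebra F G),
      IsSelfDualCode C) → IsSquare (-1 : F) := by
    rintro ⟨C, hC⟩
    exact code_to_sq hnF C hC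
  have h32 : IsSquare (-1 : F) →
      ∃ b : MonoidAlgebra F G, b * bar b = -1 ∧ IsSelfDualCode (code 1 b) := by
    rintro ⟨c, hc⟩
    exact sq_to_code c hc.symm
  refine ⟨⟨fun h => h32 (h13 h), fun ⟨b, _, hb⟩ => ⟨_, hb⟩⟩,
    ⟨fun ⟨b, _, hb⟩ => h13 ⟨_, hb⟩, h32⟩, ?_⟩
  rw [FiniteField.isSquare_neg_one_iff, Nat.even_iff]
  omega


end
end

section
/- For b ∈ FG, the 2-quasi-FG code of type I, C_{1,b} = {(u, ub) : u ∈ FG} ≤ (FG)², is self-dual (i.e., C_{1,b} equals its orthogonal complement with respect to the euclidean inner product) if and only if b·b̄ = −1. -/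
open scoped Classical

noncomputable section

section Aux

variable {F : Type} [Field F] {G : Type} [CommGroup G] [Fintype G]

lemma bar_apply (a : MonoidAlgebra F G) (x : G) : (bar a).coeff x = a.coeff x⁻¹ := by
  have h : (bar a).coeff x = (bar a).coeff (x⁻¹)⁻¹ := by rw [inv_inv]
  rw [h]
  exact Finsupp.mapDomain_apply inv_injective a.coeff x⁻¹

lemma bar_mul (a b : MonoidAlgebra F G) : bar (a * b) = bar a * bar b := by
  unfold bar
  exact MonoidAlgebra.mapDomain_mul (⟨fun x : G => x⁻¹, fun a b => mul_inv a b⟩ : G →ₙ* G) a b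

lemma inn_eq_mul_bar (a b : MonoidAlgebra F G) : inn a b = (a * bar b).coeff 1 := by
  classical
  have hs : ∀ {p : G × G},
      p ∈ Finset.univ.map ⟨fun z : G => (z, z⁻¹), fun x y h => by
        simpa using congrArg Prod.fst h⟩ ↔ p.1 * p.2 = 1 := by
    intro p
    simp only [Finset.mem_map, Finset.mem_univ, true_and, Function.Embedding.coeFn_mk]
    constructor
    · rintro ⟨z, rfl⟩; exact mul_inv_cancel z
    · intro h
      exact ⟨p.1, by rw [Prod.ext_iff]; exact ⟨rfl, inv_eq_of_mul_eq_one_right h⟩⟩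
  rw [MonoidAlgebra.mul_apply_antidiagonal a (bar b) 1 _ hs, Finset.sum_map]
  simp [inn, bar_apply]
  refine Finset.sum_congr rfl fun x _ => ?_
  show a.coeff x * b.coeff x = a.coeff x * b.coeff x⁻¹⁻¹
  rw [inv_inv]

lemma inn_mul_right (w u b : MonoidAlgebra F G) : inn w (u * b) = inn (w * bar b) u := by
  rw [inn_eq_mul_bar, inn_eq_mul_bar, bar_mul]
  ring_nf

lemma inn_add_left (a a' b : MonoidAlgebra F G) : inn (a + a') b = inn a b + inn a' b := by
  simp only [inn]
  rw [← Finset.sum_add_distrib]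
  refine Finset.sum_congr rfl fun x _ => ?_
  rw [MonoidAlgebra.coeff_add, Finsupp.add_apply, add_mul]

lemma inn_single (a : MonoidAlgebra F G) (x : G) :
    inn a (MonoidAlgebra.single x 1) = a.coeff x := by
  classical
  simp only [inn, MonoidAlgebra.single_apply, mul_ite, mul_one, mul_zero]
  simp [Finset.sum_ite_eq]

lemma inn_eq_zero_forall {a : MonoidAlgebra F G} (h : ∀ u, inn a u = 0) : a = 0 := by
  ext x
  have := h (MonoidAlgebra.single x 1)
  rw [inn_single] at this
  simpa using this

lemma mem_code_iff (a b : MonoidAlgebra F G)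
    (v : MonoidAlgebra F G × MonoidAlgebra F G) :
    v ∈ code a b ↔ ∃ u, (u * a, u * b) = v := by
  simp [code, LinearMap.mem_range, LinearMap.prod_apply, Prod.ext_iff,
    LinearMap.mulRight_apply, Pi.prod]

end Aux

/-- For `b ∈ FG`, the 2-quasi-`FG` code of type I, `C_{1,b} = {(u, ub) : u ∈ FG}`,
is self-dual iff `b · b̄ = -1`. -/
theorem stmt_5 (F : Type) [Field F] [Fintype F] (G : Type) [CommGroup G] [Fintype G]
    (hn : 1 < Fintype.card G) (hodd : Odd (Fintype.card G))
    (hcop : Nat.Coprime (Fintype.card G) (Fintype.card F))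
    (b : MonoidAlgebra F G) :
    IsSelfDualCode (code 1 b) ↔ b * bar b = -1 := by
  constructor
  · intro h
    -- (1, b) ∈ code 1 b, hence in its dual
    have h1 : ((1 : MonoidAlgebra F G), (1 : MonoidAlgebra F G) * b) ∈ dualSet (code 1 b) := by
      rw [← h]
      exact (mem_code_iff 1 b _).2 ⟨1, by simp⟩
    have key : ∀ v : MonoidAlgebra F G, inn (1 + b * bar b) v = 0 := by
      intro v
      have hv := h1 (v * 1, v * b) ((mem_code_iff 1 b _).2 ⟨v, rfl⟩)
      simp only [inn2, mul_one, one_mul, inn_mul_right] at hv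
      rw [inn_add_left]
      exact hv
    have h0 := inn_eq_zero_forall key
    linear_combination h0
  · intro hb
    have hbb' : bar b * b = -1 := by rw [mul_comm]; exact hb
    ext v
    constructor
    · -- code ⊆ dual
      rintro hv c hc
      obtain ⟨u, rfl⟩ := (mem_code_iff 1 b _).1 hc
      obtain ⟨w, rfl⟩ := (mem_code_iff 1 b _).1 hv
      simp only [inn2, mul_one, inn_mul_right]
      simp only [inn_eq_mul_bar]
      have h0 : w * bar u + w * b * bar b * bar u = 0 := by
        linear_combination (w * bar u) * hb
      rw [← Finsupp.add_apply, ← MonoidAlgebra.coeff_add, h0]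
      simp
    · -- dual ⊆ code
      intro hv
      have key : ∀ u : MonoidAlgebra F G, inn (v.1 + v.2 * bar b) u = 0 := by
        intro u
        have hu := hv (u * 1, u * b) ((mem_code_iff 1 b _).2 ⟨u, rfl⟩)
        simp only [inn2, mul_one] at hu
        rw [inn_add_left, ← inn_mul_right]
        exact hu
      have hzero : v.1 + v.2 * bar b = 0 := inn_eq_zero_forall key
      have hv1 : v.1 = -(v.2 * bar b) := by linear_combination hzero
      refine (mem_code_iff 1 b _).2 ⟨v.1, ?_⟩
      have : v.1 * b = v.2 := by
        rw [hv1]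
        calc -(v.2 * bar b) * b = -(v.2 * (bar b * b)) := by ring
        _ = v.2 := by rw [hbb']; ring
      rw [mul_one, this]

end
end

section
/- Let e_0 = n^{-1}Σ_{x∈G} x and 1† = 1 − e_0. For any b† ∈ FG with e_0·b† = 0 and b†·(b† bar) = −1†, the code C_{1†,b†} = {(u·1†, u·b†) : u ∈ FG} ≤ (FG)² is a self-orthogonal 2-quasi-FG code with dim_F C_{1†,b†} = n − 1. -/
open scoped Classical

noncomputable section

set_option linter.unusedSectionVars false

section Helpers
variable {F : Type} [Field F] {G : Type} [CommGroup G] [Fintype G]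

def SS (F : Type) [Field F] (G : Type) [CommGroup G] [Fintype G] : MonoidAlgebra F G :=
  ∑ x : G, MonoidAlgebra.single x (1 : F)

lemma SS_apply (x : G) : (SS F G).coeff x = 1 := by
  rw [SS, MonoidAlgebra.coeff_sum, Finset.sum_apply']
  simp [MonoidAlgebra.coeff_single, Finsupp.single_apply]

lemma single_mul_SS (g : G) : MonoidAlgebra.single g (1:F) * SS F G = SS F G := by
  rw [SS, Finset.mul_sum]
  have h1 : ∀ x : G, MonoidAlgebra.single g (1:F) * MonoidAlgebra.single x 1 =
      MonoidAlgebra.single (g*x) 1 := fun x => by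
    rw [MonoidAlgebra.single_mul_single, one_mul]
  rw [Finset.sum_congr rfl fun x _ => h1 x]
  exact Fintype.sum_equiv (Equiv.mulLeft g) _ _ (fun x => rfl)

lemma mul_SS (a : MonoidAlgebra F G) : a * SS F G = (∑ x : G, a.coeff x) • SS F G := by
  conv_lhs => rw [← MonoidAlgebra.sum_coeff_single a, Finsupp.sum_mul]
  rw [Finsupp.sum]
  have h : ∀ g ∈ a.coeff.support, MonoidAlgebra.single g (a.coeff g) * SS F G = (a.coeff g) • SS F G := by
    intro g _
    rw [show MonoidAlgebra.single g (a.coeff g) = (a.coeff g) • MonoidAlgebra.single g (1:F) by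
      simp [MonoidAlgebra.smul_single], smul_mul_assoc, single_mul_SS]
  refine (Finset.sum_congr rfl h).trans ?_
  have h2 : (∑ x : G, a.coeff x) = ∑ x ∈ a.coeff.support, a.coeff x :=
    (Finset.sum_subset (Finset.subset_univ _)
      (fun x _ hx => Finsupp.notMem_support_iff.mp hx)).symm
  rw [h2, Finset.sum_smul]

lemma bar_one : bar (1 : MonoidAlgebra F G) = 1 := by
  show MonoidAlgebra.mapDomainRingHom F (invMonoidHom : G →* G) 1 = 1
  exact map_one (MonoidAlgebra.mapDomainRingHom F (invMonoidHom : G →* G))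

lemma bar_SS : bar (SS F G) = SS F G := by
  ext x; rw [bar_apply, SS_apply, SS_apply]

lemma mul_apply_one (a d : MonoidAlgebra F G) : (a * d).coeff 1 = ∑ x : G, a.coeff x * d.coeff x⁻¹ := by
  rw [MonoidAlgebra.coeff_mul_antidiag a d 1
    (Finset.univ.map ⟨fun x : G => (x, x⁻¹), Function.LeftInverse.injective (g := Prod.fst) fun _ => rfl⟩)]
  · rw [Finset.sum_map]; rfl
  · intro p
    simp only [Finset.mem_map, Finset.mem_univ, Function.Embedding.coeFn_mk, true_and]
    constructor
    · rintro ⟨x, rfl⟩; simp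
    · intro h
      obtain ⟨x, y⟩ := p
      have : x⁻¹ = y := inv_eq_of_mul_eq_one_right h
      exact ⟨x, by rw [this]⟩

lemma inn_eq (a c : MonoidAlgebra F G) : inn a c = (a * bar c).coeff 1 := by
  rw [mul_apply_one, inn]
  exact Finset.sum_congr rfl fun x _ => by rw [bar_apply, inv_inv]


lemma eZero_eq : eZero F G = ((Fintype.card G : F)⁻¹) • SS F G := rfl

lemma bar_smul (c : F) (a : MonoidAlgebra F G) : bar (c • a) = c • bar a := by
  show MonoidAlgebra.ofCoeff (Finsupp.mapDomain (fun x : G => x⁻¹) (c • a).coeff) =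
    c • MonoidAlgebra.ofCoeff (Finsupp.mapDomain (fun x : G => x⁻¹) a.coeff)
  rw [MonoidAlgebra.coeff_smul, Finsupp.mapDomain_smul, MonoidAlgebra.ofCoeff_smul]

lemma bar_sub (a b : MonoidAlgebra F G) : bar (a - b) = bar a - bar b := by
  show MonoidAlgebra.mapDomainRingHom F (invMonoidHom : G →* G) (a - b) = _
  exact map_sub (MonoidAlgebra.mapDomainRingHom F (invMonoidHom : G →* G)) a b

lemma bar_eZero : bar (eZero F G) = eZero F G := by
  rw [eZero_eq, bar_smul, bar_SS]

lemma mul_eZero (a : MonoidAlgebra F G) :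
    a * eZero F G = (∑ x : G, a.coeff x) • eZero F G := by
  rw [eZero_eq, mul_smul_comm, mul_SS, smul_comm]

lemma sum_eZero (hn0 : (Fintype.card G : F) ≠ 0) :
    (∑ x : G, (eZero F G).coeff x) = 1 := by
  have : ∀ x : G, (eZero F G).coeff x = (Fintype.card G : F)⁻¹ := by
    intro x
    rw [eZero_eq]
    show (Fintype.card G : F)⁻¹ • ((SS F G).coeff x) = _
    rw [SS_apply, smul_eq_mul, mul_one]
  rw [Finset.sum_congr rfl fun x _ => this x, Finset.sum_const, Finset.card_univ,
    nsmul_eq_mul, mul_inv_cancel₀ hn0]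

lemma eZero_idem (hn0 : (Fintype.card G : F) ≠ 0) :
    eZero F G * eZero F G = eZero F G := by
  rw [mul_eZero, sum_eZero hn0, one_smul]

end Helpers

/-- For `b† ∈ FG` with `e₀·b† = 0` and `b†·(b̄†) = -(1 - e₀)`, the code
`C_{1†,b†}` is a self-orthogonal 2-quasi-`FG` code of `F`-dimension `n - 1`. -/
theorem stmt_8 (F : Type) [Field F] [Fintype F] (G : Type) [CommGroup G] [Fintype G]
    (hn : 1 < Fintype.card G) (hodd : Odd (Fintype.card G))
    (hcop : Nat.Coprime (Fintype.card G) (Fintype.card F))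
    (b : MonoidAlgebra F G)
    (hb0 : eZero F G * b = 0) (hb : b * bar b = -(1 - eZero F G)) :
    IsSelfOrthCode (code (1 - eZero F G) b) ∧
      fdim2 F (code (1 - eZero F G) b) = Fintype.card G - 1 := by
  classical
  -- (card G : F) ≠ 0
  have hn0 : (Fintype.card G : F) ≠ 0 := by
    intro h
    haveI := ringChar.charP F
    have hp : (ringChar F).Prime := CharP.char_is_prime F (ringChar F)
    have h1 : ringChar F ∣ Fintype.card G :=
      (CharP.cast_eq_zero_iff F (ringChar F) _).mp h
    have h2 : ringChar F ∣ Fintype.card F :=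
      (CharP.cast_eq_zero_iff F (ringChar F) _).mp (FiniteField.cast_card_eq_zero F)
    have hd : ringChar F ∣ Nat.gcd (Fintype.card G) (Fintype.card F) :=
      Nat.dvd_gcd h1 h2
    rw [Nat.Coprime] at hcop
    rw [hcop] at hd
    exact hp.ne_one (Nat.dvd_one.mp hd)
  set e₀ := eZero F G with he₀
  set a₁ : MonoidAlgebra F G := 1 - e₀ with ha₁
  have bar_a₁ : bar a₁ = a₁ := by
    rw [ha₁, bar_sub, bar_one, bar_eZero]
  have a₁_idem : a₁ * a₁ = a₁ := by
    rw [ha₁, sub_mul, mul_sub, mul_sub, mul_one, one_mul, mul_one,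
      eZero_idem hn0]
    ring
  have key : a₁ * bar a₁ + b * bar b = 0 := by
    rw [bar_a₁, a₁_idem, hb, ha₁, add_neg_cancel]
  constructor
  · intro u hu v hv
    obtain ⟨p, rfl⟩ := hu
    obtain ⟨r, rfl⟩ := hv
    show inn _ _ + inn _ _ = 0
    simp only [LinearMap.prod_apply, Function.prod, LinearMap.mulRight_apply]
    rw [inn_eq, inn_eq, ← Finsupp.add_apply, ← MonoidAlgebra.coeff_add]
    have hc : p * a₁ * bar (r * a₁) + p * b * bar (r * b)
        = (p * bar r) * (a₁ * bar a₁ + b * bar b) := by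
      rw [bar_mul, bar_mul]; ring
    rw [hc, key, mul_zero]
    rfl
  · -- dimension
    haveI : Module.Finite F (MonoidAlgebra F G) :=
      Module.Finite.of_basis (MonoidAlgebra.basis G F)
    set φ := (LinearMap.mulRight (MonoidAlgebra F G) a₁).prod
      (LinearMap.mulRight (MonoidAlgebra F G) b) with hφ
    set ψ := φ.restrictScalars F with hψ
    have hrange : Submodule.restrictScalars F (LinearMap.range φ) = LinearMap.range ψ := rfl
    have he0ne : e₀ ≠ 0 := by
      intro h0
      have : e₀.coeff (1 : G) = (Fintype.card G : F)⁻¹ := by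
        rw [he₀, eZero_eq]
        show (Fintype.card G : F)⁻¹ • ((SS F G).coeff 1) = _
        rw [SS_apply, smul_eq_mul, mul_one]
      rw [h0] at this
      exact inv_ne_zero hn0 this.symm
    have he0a₁ : e₀ * a₁ = 0 := by
      rw [ha₁, mul_sub, mul_one, eZero_idem hn0, sub_self]
    have hker : LinearMap.ker ψ = Submodule.span F {e₀} := by
      ext u
      rw [LinearMap.mem_ker, Submodule.mem_span_singleton]
      constructor
      · intro h
        have h1 : u * a₁ = 0 := congrArg Prod.fst h
        have h2 : u = u * e₀ := by
          have : u * a₁ = u - u * e₀ := by rw [ha₁, mul_sub, mul_one]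
          rw [this] at h1
          exact (sub_eq_zero.mp h1)
        exact ⟨∑ x : G, u.coeff x, by rw [← mul_eZero, ← h2]⟩
      · rintro ⟨c, rfl⟩
        have hx1 : (c • e₀) * a₁ = 0 := by rw [smul_mul_assoc, he0a₁, smul_zero]
        have hx2 : (c • e₀) * b = 0 := by rw [smul_mul_assoc, he₀, hb0, smul_zero]
        show ((c • e₀) * a₁, (c • e₀) * b) = (0, 0)
        rw [hx1, hx2]
    have hrk := LinearMap.finrank_range_add_finrank_ker ψ
    have hkerdim : Module.finrank F (LinearMap.ker ψ) = 1 := by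
      rw [hker]
      exact finrank_span_singleton he0ne
    have hfull : Module.finrank F (MonoidAlgebra F G) = Fintype.card G :=
      Module.finrank_eq_card_basis (MonoidAlgebra.basis G F)
    have : fdim2 F (code a₁ b) = Module.finrank F (LinearMap.range ψ) := by
      rw [fdim2, code, hrange]
    rw [this]
    rw [hkerdim, hfull] at hrk
    omega

end
end

section
/- Let e be a primitive idempotent of FG with ē = e and e ≠ e_0, where e_0 = n^{-1}Σ_{x∈G} x. Then dim_F FGe is even, and the fixed-point set (FGe)^♭ = {a ∈ FGe : ā = a} satisfies dim_F (FGe)^♭ = (1/2)·dim_F FGe; equivalently, the bar map restricts to a nontrivial field automorphism of the finite field FGe of order 2. -/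
open scoped Classical

noncomputable section

/-- bar as an `F`-algebra automorphism. -/
def barE (F : Type) [Field F] (G : Type) [CommGroup G] :
    MonoidAlgebra F G ≃ₐ[F] MonoidAlgebra F G :=
  MonoidAlgebra.domCongr F F (MulEquiv.inv G)

lemma bar_single {F : Type} [Field F] {G : Type} [CommGroup G] (x : G) (c : F) :
    bar (MonoidAlgebra.single x c) = MonoidAlgebra.single x⁻¹ c := by
  rw [bar, MonoidAlgebra.coeff_single, Finsupp.mapDomain_single, MonoidAlgebra.ofCoeff_single]

lemma barE_apply {F : Type} [Field F] {G : Type} [CommGroup G] (a : MonoidAlgebra F G) :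
    barE F G a = bar a := by
  induction a using MonoidAlgebra.induction_linear with
  | zero => simp [bar]
  | add f g hf hg =>
      rw [map_add, hf, hg]
      simp only [bar, MonoidAlgebra.coeff_add, Finsupp.mapDomain_add, MonoidAlgebra.ofCoeff_add]
  | single x c =>
      rw [bar_single, barE, MonoidAlgebra.domCongr_single]
      rfl

lemma barE_barE {F : Type} [Field F] {G : Type} [CommGroup G] (a : MonoidAlgebra F G) :
    barE F G (barE F G a) = a := by
  ext h
  rw [barE, MonoidAlgebra.domCongr_apply, MonoidAlgebra.domCongr_apply]
  simp

set_option maxHeartbeats 2000000 in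
set_option synthInstance.maxHeartbeats 1000000 in
/-- For a primitive idempotent `e` with `ē = e` and `e ≠ e₀`: `dim_F FGe` is even
and the fixed-point set `(FGe)^♭` has `F`-dimension `(1/2)·dim_F FGe`. -/
theorem stmt_11 (F : Type) [Field F] [Fintype F] (G : Type) [CommGroup G] [Fintype G]
    (hn : 1 < Fintype.card G) (hodd : Odd (Fintype.card G))
    (hcop : Nat.Coprime (Fintype.card G) (Fintype.card F))
    (e : MonoidAlgebra F G) (he : IsPrimIdem e) (hbar : bar e = e)
    (hne : e ≠ eZero F G) :
    Even (fdim F (Ideal.span {e})) ∧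
    ∃ S : Submodule F (MonoidAlgebra F G),
      (S : Set (MonoidAlgebra F G)) =
        {a : MonoidAlgebra F G |
          a ∈ Ideal.span ({e} : Set (MonoidAlgebra F G)) ∧ bar a = a} ∧
      2 * Module.finrank F S = fdim F (Ideal.span {e}) := by
  classical
  -- `n` is invertible in `F`
  have hnF : ((Fintype.card G : ℕ) : F) ≠ 0 := by
    intro h
    have hdvd : ringChar F ∣ Fintype.card G := ringChar.dvd h
    obtain ⟨m, hprime, hcardF⟩ := FiniteField.card F (ringChar F)
    have hdvd2 : ringChar F ∣ Fintype.card F := by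
      rw [hcardF]; exact dvd_pow_self _ (by positivity)
    have := Nat.dvd_gcd hdvd hdvd2
    rw [hcop] at this
    exact Nat.Prime.one_lt hprime |>.ne' (Nat.dvd_one.mp this)
  haveI : NeZero ((Fintype.card G : ℕ) : F) := ⟨hnF⟩
  haveI : NeZero ((Nat.card G : ℕ) : F) := ⟨by rw [Nat.card_eq_fintype_card]; exact hnF⟩
  -- every ideal is generated by an idempotent acting as identity on it
  have gen : ∀ J : Ideal (MonoidAlgebra F G), ∃ f, IsIdempotentElem f ∧ f ∈ J ∧
      ∀ a ∈ J, a * f = a := by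
    intro J
    obtain ⟨Q, hQ⟩ := MonoidAlgebra.Submodule.exists_isCompl J
    have h1 : (1 : MonoidAlgebra F G) ∈ J ⊔ Q := by rw [hQ.sup_eq_top]; trivial
    obtain ⟨f, hf, g, hg, hfg⟩ := Submodule.mem_sup.mp h1
    have key : ∀ a ∈ J, a * g = 0 := by
      intro a ha
      have h2 : a * g ∈ J := J.mul_mem_right g ha
      have h3 : a * g ∈ Q := by
        rw [← smul_eq_mul]; exact Q.smul_mem a hg
      have h4 : a * g ∈ J ⊓ Q := ⟨h2, h3⟩
      rwa [hQ.inf_eq_bot, Submodule.mem_bot] at h4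
    have hid : ∀ a ∈ J, a * f = a := by
      intro a ha
      have : a * (f + g) = a := by rw [hfg, mul_one]
      rwa [mul_add, key a ha, add_zero] at this
    exact ⟨f, hid f hf, hf, hid⟩
  -- elements of `span {e}` are fixed by multiplication by `e`
  have hme : ∀ a ∈ Ideal.span ({e} : Set (MonoidAlgebra F G)), a * e = a := by
    intro a ha
    obtain ⟨u, rfl⟩ := Ideal.mem_span_singleton'.mp ha
    rw [mul_assoc, he.1]
  -- `span {e}` has no zero divisors
  have hdom : ∀ u v : MonoidAlgebra F G, u ∈ Ideal.span ({e} : Set (MonoidAlgebra F G)) →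
      v ∈ Ideal.span ({e} : Set (MonoidAlgebra F G)) → u * v = 0 → u = 0 ∨ v = 0 := by
    intro u v hu hv huv
    by_cases hu0 : u = 0
    · exact Or.inl hu0
    right
    obtain ⟨f, hfidem, hfmem, hfgen⟩ := gen (Ideal.span {u})
    obtain ⟨w, hw⟩ := Ideal.mem_span_singleton'.mp hfmem
    have huf : u * f = u := hfgen u (Ideal.mem_span_singleton_self u)
    have hf0 : f ≠ 0 := fun h => hu0 (by rw [← huf, h, mul_zero])
    have hfe : f ∈ Ideal.span ({e} : Set (MonoidAlgebra F G)) := by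
      rw [← hw]; exact Ideal.mul_mem_left _ w hu
    have hfe' : f * e = f := hme f hfe
    have hfv : f * v = 0 := by rw [← hw, mul_assoc, huv, mul_zero]
    by_cases hef : e - f = 0
    · have hef' : e = f := by rwa [sub_eq_zero] at hef
      rw [← hme v hv, mul_comm, hef', hfv]
    · exfalso
      apply he.2.2
      refine ⟨f, e - f, hfidem, ?_, hf0, hef, ?_, by ring⟩
      · have h1 : (e - f) * (e - f) = e * e - e * f - f * e + f * f := by ring
        rw [IsIdempotentElem, h1, he.1, hfidem, hfe', mul_comm e f, hfe']
        ring
      · rw [mul_sub, hfe', hfidem, sub_self]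
  -- the ideal `I = span {1-e}` and the quotient `K`
  set I : Ideal (MonoidAlgebra F G) := Ideal.span {1 - e} with hI
  have hmi : ∀ a ∈ I, a * e = 0 := by
    intro a ha
    obtain ⟨w, rfl⟩ := Ideal.mem_span_singleton'.mp ha
    rw [mul_assoc, sub_mul, one_mul, he.1, sub_self, mul_zero]
  have hcap : ∀ a ∈ Ideal.span ({e} : Set (MonoidAlgebra F G)), a ∈ I → a = 0 := by
    intro a hae hai
    rw [← hme a hae, hmi a hai]
  have hIne : I ≠ ⊤ := by
    intro h
    exact he.2.1 (hcap e (Ideal.mem_span_singleton_self e) (h ▸ Submodule.mem_top))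
  let π : MonoidAlgebra F G →+* (MonoidAlgebra F G ⧸ I) := Ideal.Quotient.mk I
  have hπe : π e = 1 := by
    rw [show (1 : MonoidAlgebra F G ⧸ I) = π 1 from (map_one π).symm]
    exact Ideal.Quotient.eq.mpr
      (by rw [show e - 1 = -(1 - e) by ring]; exact neg_mem (Ideal.mem_span_singleton_self _))
  haveI : Nontrivial (MonoidAlgebra F G ⧸ I) := Ideal.Quotient.nontrivial_iff.mpr hIne
  haveI : Finite (MonoidAlgebra F G) := Finite.of_equiv _ MonoidAlgebra.coeffEquiv.symm
  haveI : Finite (MonoidAlgebra F G ⧸ I) := Finite.of_surjective π Ideal.Quotient.mk_surjective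
  haveI : NoZeroDivisors (MonoidAlgebra F G ⧸ I) := by
    constructor
    intro a b hab
    obtain ⟨a, rfl⟩ := Ideal.Quotient.mk_surjective a
    obtain ⟨b, rfl⟩ := Ideal.Quotient.mk_surjective b
    have hmul : (a * e) * (b * e) ∈ I := by
      rw [← Ideal.Quotient.eq_zero_iff_mem, map_mul, map_mul, map_mul]
      show (π a * π e) * (π b * π e) = 0
      rw [hπe, mul_one, mul_one]
      exact hab
    have hmem : (a * e) * (b * e) ∈ Ideal.span ({e} : Set (MonoidAlgebra F G)) :=
      Ideal.mul_mem_left _ _ (Ideal.mul_mem_left _ _ (Ideal.mem_span_singleton_self e))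
    have h0 : (a * e) * (b * e) = 0 := hcap _ hmem hmul
    rcases hdom _ _ (Ideal.mul_mem_left _ a (Ideal.mem_span_singleton_self e))
        (Ideal.mul_mem_left _ b (Ideal.mem_span_singleton_self e)) h0 with h | h
    · left
      have h2 : π (a * e) = 0 := by rw [h, map_zero]
      rwa [map_mul, hπe, mul_one] at h2
    · right
      have h2 : π (b * e) = 0 := by rw [h, map_zero]
      rwa [map_mul, hπe, mul_one] at h2
  haveI : IsDomain (MonoidAlgebra F G ⧸ I) := NoZeroDivisors.to_isDomain _
  letI : Field (MonoidAlgebra F G ⧸ I) := (Finite.isDomain_to_isField _).toField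
  -- the induced automorphism of `K`
  have hbar1e : (barE F G) (1 - e) = 1 - e := by rw [map_sub, map_one, barE_apply, hbar]
  have hmapbar : I = Ideal.map ((barE F G : MonoidAlgebra F G →+* MonoidAlgebra F G)) I := by
    rw [hI, Ideal.map_span, Set.image_singleton]
    rw [show ((barE F G : MonoidAlgebra F G →+* MonoidAlgebra F G) (1 - e))
      = barE F G (1 - e) from rfl, hbar1e]
  let σ : (MonoidAlgebra F G ⧸ I) ≃ₐ[F] (MonoidAlgebra F G ⧸ I) :=
    Ideal.quotientEquivAlg I I (barE F G) hmapbar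
  have hσmk : ∀ a, σ (π a) = π (barE F G a) := fun a => rfl
  have hσ2 : σ ^ 2 = 1 := by
    ext k
    obtain ⟨a, rfl⟩ := Ideal.Quotient.mk_surjective k
    rw [pow_two]
    show σ (σ (π a)) = π a
    rw [hσmk, hσmk, barE_barE]
  have hσne : σ ≠ 1 := by
    intro hσ1
    -- all group elements act trivially on `e`
    have hxe : ∀ x : G, MonoidAlgebra.single x (1 : F) * e
        = MonoidAlgebra.single x⁻¹ (1 : F) * e := by
      intro x
      have h1 : π (MonoidAlgebra.single x⁻¹ (1 : F)) = π (MonoidAlgebra.single x (1 : F)) := by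
        have h0 := hσmk (MonoidAlgebra.single x (1 : F))
        rw [hσ1, AlgEquiv.one_apply, barE_apply, bar_single] at h0
        exact h0.symm
      have h2 : MonoidAlgebra.single x⁻¹ (1 : F) - MonoidAlgebra.single x (1 : F) ∈ I :=
        Ideal.Quotient.eq.mp h1
      have h3 := hmi _ h2
      rw [sub_mul, sub_eq_zero] at h3
      exact h3.symm
    have hsq : ∀ x : G, MonoidAlgebra.single (x * x) (1 : F) * e = e := by
      intro x
      have : MonoidAlgebra.single (x * x) (1 : F)
          = MonoidAlgebra.single x (1 : F) * MonoidAlgebra.single x (1 : F) := by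
        rw [MonoidAlgebra.single_mul_single, one_mul]
      rw [this, mul_assoc, hxe, ← mul_assoc, MonoidAlgebra.single_mul_single, one_mul,
        mul_inv_cancel, ← MonoidAlgebra.one_def, one_mul]
    have hy : ∀ y : G, MonoidAlgebra.single y (1 : F) * e = e := by
      intro y
      obtain ⟨m, hm⟩ := hodd
      have hsq' : y ^ (m + 1) * y ^ (m + 1) = y := by
        rw [← pow_add]
        have : m + 1 + (m + 1) = Fintype.card G + 1 := by omega
        rw [this, pow_succ, pow_card_eq_one, one_mul]
      calc MonoidAlgebra.single y (1 : F) * e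
          = MonoidAlgebra.single (y ^ (m + 1) * y ^ (m + 1)) (1 : F) * e := by rw [hsq']
        _ = e := hsq _
    -- hence `e` is a multiple of `eZero`
    have hez : eZero F G * e = e := by
      rw [eZero, smul_mul_assoc, Finset.sum_mul,
        Finset.sum_congr rfl (fun x _ => hy x), Finset.sum_const, Finset.card_univ,
        ← Nat.cast_smul_eq_nsmul F, smul_smul, inv_mul_cancel₀ hnF, one_smul]
    set ε : MonoidAlgebra F G →ₐ[F] F := MonoidAlgebra.lift F F G 1 with hε
    have hone : ∀ x : G, MonoidAlgebra.single x (1 : F) * eZero F G = eZero F G := by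
      intro x
      rw [eZero, mul_smul_comm]
      congr 1
      rw [Finset.mul_sum]
      simp_rw [MonoidAlgebra.single_mul_single, one_mul]
      exact Fintype.sum_equiv (Equiv.mulLeft x) _ _ (fun y => rfl)
    have hεe : ∀ a : MonoidAlgebra F G, a * eZero F G = ε a • eZero F G := by
      intro a
      induction a using MonoidAlgebra.induction_linear with
      | zero => simp
      | add f g hf hg => rw [add_mul, hf, hg, map_add, add_smul]
      | single x c =>
        have h4 : MonoidAlgebra.single x c = c • MonoidAlgebra.single x (1 : F) := by
          rw [MonoidAlgebra.smul_single', mul_one]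
        have h5 : ε (MonoidAlgebra.single x (1 : F)) = 1 := by
          rw [hε, MonoidAlgebra.lift_single]; simp
        rw [h4, smul_mul_assoc, hone, map_smul, h5]
        simp
    have h1 : e = ε e • eZero F G := by rw [← hεe, mul_comm, hez]
    have hεz : ε (eZero F G) = 1 := by
      rw [eZero, map_smul, map_sum]
      have h5 : ∀ x : G, ε (MonoidAlgebra.single x (1 : F)) = 1 := by
        intro x; rw [hε, MonoidAlgebra.lift_single]; simp
      rw [Finset.sum_congr rfl (fun x _ => h5 x), Finset.sum_const, Finset.card_univ,
        ← Nat.cast_smul_eq_nsmul F, smul_smul, inv_mul_cancel₀ hnF, one_smul]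
    have hzz : eZero F G * eZero F G = eZero F G := by rw [hεe, hεz, one_smul]
    have h2 : (ε e * ε e) • eZero F G = e := by
      calc (ε e * ε e) • eZero F G = (ε e • eZero F G) * (ε e • eZero F G) := by
            rw [smul_mul_assoc, mul_smul_comm, smul_smul, hzz]
        _ = e * e := by rw [← h1]
        _ = e := he.1
    have hez0 : eZero F G ≠ 0 := by
      intro h
      rw [h, smul_zero] at h1
      exact he.2.1 h1
    have hcc : ε e * ε e = ε e := by
      exact smul_left_injective F hez0 (h2.trans h1)
    have h6 : ε e * (ε e - 1) = 0 := by rw [mul_sub, hcc, mul_one, sub_self]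
    rcases mul_eq_zero.mp h6 with h | h
    · rw [h, zero_smul] at h1; exact he.2.1 h1
    · rw [sub_eq_zero] at h
      rw [h, one_smul] at h1; exact hne h1
  -- Galois theory of the fixed field
  haveI : FiniteDimensional F (MonoidAlgebra F G ⧸ I) := Module.Finite.of_finite
  haveI : Finite ((MonoidAlgebra F G ⧸ I) ≃ₐ[F] (MonoidAlgebra F G ⧸ I)) :=
    Finite.of_injective (fun f => (f : (MonoidAlgebra F G ⧸ I) → (MonoidAlgebra F G ⧸ I)))
      DFunLike.coe_injective
  set H : Subgroup ((MonoidAlgebra F G ⧸ I) ≃ₐ[F] (MonoidAlgebra F G ⧸ I)) :=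
    Subgroup.zpowers σ with hH
  letI : Fintype H := Fintype.ofFinite H
  haveI : Fact (Nat.Prime 2) := ⟨Nat.prime_two⟩
  set L := IntermediateField.fixedField H with hL
  have hLK : Module.finrank L (MonoidAlgebra F G ⧸ I) = 2 := by
    rw [hL, IntermediateField.finrank_fixedField_eq_card]
    rw [hH, Nat.card_zpowers, orderOf_eq_prime hσ2 hσne]
  have hLe : ∀ k ∈ L, σ k = k := by
    intro k hk
    have h1 : ∀ g : H, g • k = k := hk
    have := h1 ⟨σ, Subgroup.mem_zpowers σ⟩
    rwa [Subgroup.mk_smul, AlgEquiv.smul_def] at this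
  have hLmem : ∀ k, σ k = k → k ∈ L := by
    intro k hk
    have hst : H ≤ MulAction.stabilizer ((MonoidAlgebra F G ⧸ I) ≃ₐ[F] (MonoidAlgebra F G ⧸ I)) k := by
      rw [hH, Subgroup.zpowers_le, MulAction.mem_stabilizer_iff, AlgEquiv.smul_def]
      exact hk
    intro g
    exact hst g.2
  -- comparing `span {e}` with the quotient
  set V : Submodule F (MonoidAlgebra F G) :=
    Submodule.restrictScalars F (Ideal.span ({e} : Set (MonoidAlgebra F G))) with hV
  let πl : MonoidAlgebra F G →ₗ[F] (MonoidAlgebra F G ⧸ I) :=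
    (Ideal.Quotient.mkₐ F I).toLinearMap
  have hπl : ∀ a, πl a = π a := fun a => rfl
  have hginj : ∀ a : MonoidAlgebra F G, a ∈ Ideal.span ({e} : Set (MonoidAlgebra F G)) →
      π a = 0 → a = 0 := by
    intro a ha h0
    exact hcap a ha (Ideal.Quotient.eq_zero_iff_mem.mp h0)
  let gV : V →ₗ[F] (MonoidAlgebra F G ⧸ I) := πl.comp V.subtype
  have hVinj : Function.Injective gV := by
    intro a b hab
    have h1 : π a.1 = π b.1 := hab
    have h2 : a.1 - b.1 ∈ Ideal.span ({e} : Set (MonoidAlgebra F G)) := sub_mem a.2 b.2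
    have h3 : π (a.1 - b.1) = 0 := by rw [map_sub, h1, sub_self]
    have := hginj _ h2 h3
    exact Subtype.ext (by rwa [sub_eq_zero] at this)
  have hVsurj : Function.Surjective gV := by
    intro k
    obtain ⟨a, rfl⟩ := Ideal.Quotient.mk_surjective k
    refine ⟨⟨a * e, Ideal.mul_mem_left _ a (Ideal.mem_span_singleton_self e)⟩, ?_⟩
    show π (a * e) = π a
    rw [map_mul, hπe, mul_one]
  have hdimV : Module.finrank F V = Module.finrank F (MonoidAlgebra F G ⧸ I) :=
    (LinearEquiv.ofBijective gV ⟨hVinj, hVsurj⟩).finrank_eq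
  -- the fixed submodule `S`
  set S : Submodule F (MonoidAlgebra F G) :=
    V ⊓ LinearMap.eqLocus (barE F G).toLinearMap (LinearMap.id) with hS
  have hSmem : ∀ a : MonoidAlgebra F G, a ∈ S ↔
      a ∈ Ideal.span ({e} : Set (MonoidAlgebra F G)) ∧ bar a = a := by
    intro a
    rw [hS, Submodule.mem_inf, hV, Submodule.restrictScalars_mem, LinearMap.mem_eqLocus]
    constructor
    · rintro ⟨h1, h2⟩
      refine ⟨h1, ?_⟩
      rw [← barE_apply]
      exact h2
    · rintro ⟨h1, h2⟩
      refine ⟨h1, ?_⟩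
      show barE F G a = a
      rw [barE_apply]
      exact h2
  have hSset : (S : Set (MonoidAlgebra F G)) =
      {a : MonoidAlgebra F G |
        a ∈ Ideal.span ({e} : Set (MonoidAlgebra F G)) ∧ bar a = a} := by
    ext a; exact hSmem a
  -- `S` is isomorphic to `L`
  have hmemcod : ∀ s : S, πl s.1 ∈ Subalgebra.toSubmodule L.toSubalgebra := by
    intro s
    have hs := (hSmem s.1).mp s.2
    have h1 : σ (π s.1) = π s.1 := by
      rw [hσmk, barE_apply, hs.2]
    exact hLmem _ h1
  let gS : S →ₗ[F] (Subalgebra.toSubmodule L.toSubalgebra) :=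
    LinearMap.codRestrict _ (πl.comp S.subtype) hmemcod
  have hSinj : Function.Injective gS := by
    intro a b hab
    have h1 : π a.1 = π b.1 := congrArg Subtype.val hab
    have h2 : a.1 - b.1 ∈ Ideal.span ({e} : Set (MonoidAlgebra F G)) :=
      sub_mem ((hSmem a.1).mp a.2).1 ((hSmem b.1).mp b.2).1
    have h3 : π (a.1 - b.1) = 0 := by rw [map_sub, h1, sub_self]
    have := hginj _ h2 h3
    exact Subtype.ext (by rwa [sub_eq_zero] at this)
  have hSsurj : Function.Surjective gS := by
    rintro ⟨k, hk⟩
    have hk' : k ∈ L := hk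
    obtain ⟨a, ha⟩ := Ideal.Quotient.mk_surjective k
    have hmem1 : a * e ∈ Ideal.span ({e} : Set (MonoidAlgebra F G)) :=
      Ideal.mul_mem_left _ a (Ideal.mem_span_singleton_self e)
    have hπae : π (a * e) = k := by
      rw [map_mul, hπe, mul_one, ha]
    have hbar1 : barE F G (a * e) ∈ Ideal.span ({e} : Set (MonoidAlgebra F G)) := by
      rw [map_mul, barE_apply e, hbar]
      exact Ideal.mul_mem_left _ _ (Ideal.mem_span_singleton_self e)
    have hbar2 : π (barE F G (a * e)) = π (a * e) := by
      rw [← hσmk, hπae, hLe k hk']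
    have hbar3 : barE F G (a * e) - a * e ∈ I := Ideal.Quotient.eq.mp hbar2
    have hbar4 : barE F G (a * e) = a * e := by
      have := hcap _ (sub_mem hbar1 hmem1) hbar3
      rwa [sub_eq_zero] at this
    refine ⟨⟨a * e, (hSmem (a * e)).mpr ⟨hmem1, by rw [← barE_apply, hbar4]⟩⟩, ?_⟩
    exact Subtype.ext hπae
  have hdimS : Module.finrank F S
      = Module.finrank F (Subalgebra.toSubmodule L.toSubalgebra) :=
    (LinearEquiv.ofBijective gS ⟨hSinj, hSsurj⟩).finrank_eq
  have hdimS' : Module.finrank F S = Module.finrank F L := by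
    rw [hdimS, Subalgebra.finrank_toSubmodule, IntermediateField.finrank_eq_finrank_subalgebra]
  have htower : Module.finrank F L * Module.finrank L (MonoidAlgebra F G ⧸ I)
      = Module.finrank F (MonoidAlgebra F G ⧸ I) :=
    Module.finrank_mul_finrank F L (MonoidAlgebra F G ⧸ I)
  have hfd : fdim F (Ideal.span {e}) = 2 * Module.finrank F S := by
    have h1 : fdim F (Ideal.span {e}) = Module.finrank F V := rfl
    rw [h1, hdimV, ← htower, hLK, hdimS']
    ring
  exact ⟨⟨Module.finrank F S, by omega⟩, S, hSset, by omega⟩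

end
end

section
/- Let e be a primitive idempotent of FG with ē = e and e ≠ e_0, where e_0 = n^{-1}Σ_{x∈G} x, and write dim_F FGe = 2k (this dimension is even). Then the number of elements β ∈ FGe satisfying β·β̄ = −e equals q^{k} + 1. Equivalently, in the finite field FGe of cardinality q^{2k} on which the bar map acts as the Frobenius β ↦ β^{q^k}, the equation β^{q^k + 1} = −e has exactly q^k + 1 solutions. -/
open scoped Classical

noncomputable section

section Helpers


lemma aux_pow_idem {R : Type*} [CommRing R] {f : R} (hf : IsIdempotentElem f) :
    ∀ m : ℕ, f ^ (m + 1) = f := by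
  intro m
  induction m with
  | zero => simp
  | succ n ih => rw [pow_succ, ih, hf]

lemma aux_reduced {R : Type*} [CommRing R] [IsSemisimpleRing R] : IsReduced R := by
  constructor
  intro a ha
  obtain ⟨f, hf, hspan⟩ := IsSemisimpleRing.ideal_eq_span_idempotent (Ideal.span {a})
  have hfm : f ∈ Ideal.span ({a} : Set R) := by
    rw [hspan]; exact Ideal.subset_span rfl
  obtain ⟨r, hr⟩ := Ideal.mem_span_singleton'.1 hfm
  have hnil : IsNilpotent f := by
    obtain ⟨m, hm⟩ := ha
    exact ⟨m, by rw [← hr, mul_pow, hm, mul_zero]⟩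
  obtain ⟨m, hm⟩ := hnil
  have hf0 : f = 0 := by
    rw [← aux_pow_idem hf m, pow_succ, hm, zero_mul]
  have : a ∈ Ideal.span ({f} : Set R) := by rw [← hspan]; exact Ideal.subset_span rfl
  rw [hf0, Ideal.span_singleton_eq_bot.2 rfl, Ideal.mem_bot] at this
  exact this

lemma aux_isField {R : Type*} [CommRing R] [Finite R] [Nontrivial R] (hred : IsReduced R)
    (hid : ∀ c : R, c * c = c → c = 0 ∨ c = 1) : IsField R := by
  refine ⟨exists_pair_ne R, mul_comm, ?_⟩
  intro a ha
  obtain ⟨i, j, hij, hpow⟩ := Finite.exists_ne_map_eq_of_infinite (fun n : ℕ => a ^ n)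
  wlog hlt : i < j generalizing i j
  · exact this j i hij.symm hpow.symm (by omega)
  obtain ⟨t, ht1, hjt⟩ : ∃ t, 1 ≤ t ∧ j = i + t := ⟨j - i, by omega, by omega⟩
  have key1 : ∀ s : ℕ, a ^ (i + s) = a ^ (i + s + t) := by
    intro s
    have : a ^ (i + s + t) = a ^ j * a ^ s := by rw [← pow_add]; congr 1; omega
    rw [this, ← hpow, ← pow_add]
  have key : ∀ c s : ℕ, a ^ (i + s) = a ^ (i + s + c * t) := by
    intro c
    induction c with
    | zero => simp
    | succ n ih =>
      intro s
      rw [key1 s, show i + s + t = i + (s + t) by ring, ih (s + t)]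
      congr 1; ring
  obtain ⟨N, hNi, hNt, hN1⟩ : ∃ N, i ≤ N ∧ N = (i + 1) * t ∧ 1 ≤ N :=
    ⟨(i + 1) * t, by nlinarith, rfl, by nlinarith⟩
  have hidem : a ^ N * a ^ N = a ^ N := by
    rw [← pow_add]
    have := key (i + 1) (N - i)
    rw [show i + (N - i) = N by omega] at this
    rw [show N + N = N + (i+1)*t by omega, ← this]
  rcases hid _ hidem with h0 | h1
  · exact absurd (hred.eq_zero a ⟨N, h0⟩) ha
  · exact ⟨a ^ (N - 1), by rw [← pow_succ', show N - 1 + 1 = N by omega, h1]⟩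



lemma core_count {K : Type} [Field K] [Finite K] (σ : K →+* K)
    (hσ2 : ∀ x, σ (σ x) = x) (hσne : ∃ x, σ x ≠ x) :
    ∃ l : ℕ, 2 ≤ l ∧ l ^ 2 = Nat.card K ∧
      Nat.card {y : K | y * σ y = -1} = l + 1 := by
  haveI : Fintype K := Fintype.ofFinite K
  let σe : RingAut K :=
    { toFun := σ, invFun := σ, left_inv := hσ2, right_inv := hσ2,
      map_mul' := map_mul σ, map_add' := map_add σ }
  have happ : ∀ x, σe x = σ x := fun _ => rfl
  have hσe2 : σe * σe = 1 := by
    ext x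
    show σ (σ x) = x
    exact hσ2 x
  have hσe_ne : σe ≠ 1 := by
    obtain ⟨x, hx⟩ := hσne
    intro h
    exact hx (by rw [← happ x, h]; rfl)
  have hord : orderOf σe = 2 := orderOf_eq_prime (by rw [sq]; exact hσe2) hσe_ne
  haveI : Finite (RingAut K) :=
    Finite.of_injective (fun f => (f : K → K)) (fun f g h => by
      ext x; exact congrFun h x)
  let Γ := Subgroup.zpowers σe
  haveI : Fintype Γ := Fintype.ofFinite _
  have hcardΓ : Nat.card Γ = 2 := by rw [Nat.card_zpowers, hord]
  have hmemΓ : ∀ g : Γ, (g : RingAut K) = 1 ∨ (g : RingAut K) = σe := by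
    rintro ⟨g, hg⟩
    obtain ⟨n, rfl⟩ := Subgroup.mem_zpowers_iff.1 hg
    simp only
    rw [← zpow_mod_orderOf, hord, show ((2 : ℕ) : ℤ) = 2 by norm_num]
    rcases Int.emod_two_eq_zero_or_one n with h | h <;> rw [h]
    · left; exact zpow_zero σe
    · right; exact zpow_one σe
  have hsmul : ∀ (g : Γ) (x : K), g • x = (g : RingAut K) x := fun _ _ => rfl
  haveI : FaithfulSMul Γ K := ⟨fun {g₁ g₂} h => Subtype.ext (RingEquiv.ext fun x => by
    rw [← hsmul g₁ x, ← hsmul g₂ x]; exact h x)⟩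
  set L := FixedPoints.subfield Γ K with hL
  have hrank : Module.finrank L K = 2 := by
    rw [FixedPoints.finrank_eq_card, ← Nat.card_eq_fintype_card, hcardΓ]
  have hmemL : ∀ x : K, x ∈ L ↔ σ x = x := by
    intro x
    constructor
    · intro h
      have := h ⟨σe, Subgroup.mem_zpowers σe⟩
      rwa [hsmul] at this
    · intro h g
      rw [hsmul]
      rcases hmemΓ g with h1 | h1 <;> rw [h1]
      · rfl
      · exact h
  haveI : Fintype L := Fintype.ofFinite L
  set l := Nat.card L with hldef
  have hl2 : 2 ≤ l := by
    rw [hldef, Nat.card_eq_fintype_card]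
    exact Fintype.one_lt_card
  have hKcard : Nat.card K = l ^ 2 := by
    rw [hldef, Nat.card_eq_fintype_card, Nat.card_eq_fintype_card, ← hrank]
    exact Module.card_eq_pow_finrank
  -- units homs
  let σm : Kˣ →* Kˣ := Units.map (σ : K →* K)
  have hσm : ∀ u : Kˣ, (σm u : K) = σ u := fun u => rfl
  let φ : Kˣ →* Kˣ := MonoidHom.id Kˣ * σm
  have hφ : ∀ u : Kˣ, φ u = u * σm u := fun u => rfl
  let δ : Kˣ →* Kˣ := σm * (MonoidHom.id Kˣ)⁻¹
  have hδ : ∀ u : Kˣ, δ u = σm u * u⁻¹ := fun u => rfl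
  have hkerδ : ∀ u : Kˣ, u ∈ δ.ker ↔ σ (u : K) = u := by
    intro u
    rw [MonoidHom.mem_ker, hδ, mul_inv_eq_one]
    constructor
    · intro h; rw [← hσm, h]
    · intro h; exact Units.ext (by rw [hσm]; exact h)
  have hinvfix : ∀ u : Kˣ, σ (u : K) = u → σ ((u⁻¹ : Kˣ) : K) = ((u⁻¹ : Kˣ) : K) := by
    intro u h
    rw [Units.val_inv_eq_inv_val, map_inv₀, h]
  -- card of ker δ
  have E1 : Lˣ ≃ δ.ker := by
    refine
      { toFun := fun v => ⟨Units.map (L.subtype : L →* K) v, ?_⟩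
        invFun := fun u =>
          { val := ⟨(u : Kˣ), (hmemL _).2 ((hkerδ _).1 u.2)⟩
            inv := ⟨((u : Kˣ)⁻¹ : Kˣ), (hmemL _).2 (hinvfix _ ((hkerδ _).1 u.2))⟩
            val_inv := Subtype.ext (by simp)
            inv_val := Subtype.ext (by simp) }
        left_inv := fun v => Units.ext (Subtype.ext rfl)
        right_inv := fun u => Subtype.ext (Units.ext rfl) }
    rw [hkerδ]
    show σ ((v : L) : K) = _
    exact (hmemL _).1 (v : L).2
  have hcard_kerδ : Nat.card δ.ker = l - 1 := by
    rw [← Nat.card_congr E1, Nat.card_units, hldef]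
  have hiso : ∀ f : Kˣ →* Kˣ, Nat.card Kˣ = Nat.card f.range * Nat.card f.ker := by
    intro f
    rw [Subgroup.card_eq_card_quotient_mul_card_subgroup f.ker]
    congr 1
    exact Nat.card_congr (QuotientGroup.quotientKerEquivRange f).toEquiv
  have hcardKu : Nat.card Kˣ = l ^ 2 - 1 := by rw [Nat.card_units, hKcard]
  have hfactor : ∀ n : ℕ, 1 ≤ n → (n - 1) * (n + 1) = n ^ 2 - 1 := by
    intro n hn
    obtain ⟨m, rfl⟩ : ∃ m, n = m + 1 := ⟨n - 1, by omega⟩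
    have : (m + 1) ^ 2 = m * (m + 1 + 1) + 1 := by ring
    rw [this]
    simp
  -- Hilbert 90 : φ.ker ≤ δ.range
  have hH90 : φ.ker ≤ δ.range := by
    intro u hu
    have hu1 : u * σm u = 1 := hu
    let σΓ : Γ := ⟨σe, Subgroup.mem_zpowers σe⟩
    let σa : K ≃ₐ[L] K := MulSemiringAction.toAlgAut Γ L K σΓ
    have hσa_apply : ∀ x, σa x = σ x := fun x => rfl
    have haut : ∀ g : K ≃ₐ[L] K, g = 1 ∨ g = σa := by
      intro g
      obtain ⟨h, rfl⟩ := (FixedPoints.toAlgAut_bijective Γ K).surjective g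
      rcases hmemΓ h with h1 | h1
      · left
        have : h = 1 := Subtype.ext h1
        rw [this, map_one]
      · right
        have : h = σΓ := Subtype.ext h1
        rw [this]
    have hσa_ne : σa ≠ 1 := by
      obtain ⟨x, hx⟩ := hσne
      intro h
      apply hx
      rw [← hσa_apply x, h]
      rfl
    have hσa_sq : σa * σa = 1 := by
      show MulSemiringAction.toAlgAut Γ L K σΓ * MulSemiringAction.toAlgAut Γ L K σΓ = 1
      rw [← map_mul]
      have : σΓ * σΓ = 1 := Subtype.ext hσe2
      rw [this, map_one]
    have hsmul_u : ∀ v : Kˣ, σa • v = σm v := by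
      intro v
      rw [AlgEquiv.smul_units_def]
      exact Units.ext rfl
    let f : (K ≃ₐ[L] K) → Kˣ := fun g => if g = 1 then 1 else u
    have hco : groupCohomology.IsMulCocycle₁ f := by
      intro g h
      rcases haut g with rfl | rfl <;> rcases haut h with rfl | rfl
      · simp [f]
      · simp [f]
      · simp only [f, mul_one, if_neg hσa_ne, if_pos rfl, smul_one, one_mul]
      · rw [hσa_sq]
        simp only [f, if_pos rfl, if_neg hσa_ne]
        rw [hsmul_u u]
        rw [← hu1, mul_comm]
    obtain ⟨β, hβ⟩ := groupCohomology.isMulCoboundary₁_of_isMulCocycle₁_of_aut_to_units f hco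
    have hb := hβ σa
    rw [hsmul_u β] at hb
    refine ⟨β, ?_⟩
    rw [hδ, ← div_eq_mul_inv, hb]
    simp [f, hσa_ne]
  -- δ.range ≤ φ.ker
  have hσm2 : ∀ v : Kˣ, σm (σm v) = v := by
    intro v
    exact Units.ext (by rw [hσm, hσm, hσ2])
  have hin1 : δ.range ≤ φ.ker := by
    rintro _ ⟨v, rfl⟩
    show φ (δ v) = 1
    rw [hφ, hδ, map_mul, map_inv, hσm2, mul_comm v (σm v)⁻¹, mul_mul_mul_comm,
      mul_inv_cancel, inv_mul_cancel, one_mul]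
  have hkerφ_eq : φ.ker = δ.range := le_antisymm hH90 hin1
  -- card computations
  have hδiso := hiso δ
  rw [hcardKu, hcard_kerδ] at hδiso
  have hcard_rangeδ : Nat.card δ.range = l + 1 := by
    have h1 : (l - 1) * (l + 1) = l ^ 2 - 1 := hfactor l (by omega)
    have hpos : 0 < l - 1 := by omega
    have : (l - 1) * Nat.card δ.range = (l - 1) * (l + 1) := by
      rw [h1, hδiso]; ring
    exact Nat.eq_of_mul_eq_mul_left hpos this
  have hcard_kerφ : Nat.card φ.ker = l + 1 := by rw [hkerφ_eq, hcard_rangeδ]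
  have hφiso := hiso φ
  rw [hcardKu, hcard_kerφ] at hφiso
  have hcard_rangeφ : Nat.card φ.range = l - 1 := by
    have h1 : (l - 1) * (l + 1) = l ^ 2 - 1 := hfactor l (by omega)
    have : Nat.card φ.range * (l + 1) = (l - 1) * (l + 1) := by
      rw [h1, hφiso]
    have hpos : 0 < l + 1 := by omega
    exact Nat.eq_of_mul_eq_mul_right hpos this
  -- φ.range = δ.ker
  have hin2 : φ.range ≤ δ.ker := by
    rintro _ ⟨v, rfl⟩
    rw [hkerδ, hφ, Units.val_mul, hσm, map_mul, hσ2, mul_comm]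
  have hrange_eq : φ.range = δ.ker := by
    apply Subgroup.eq_of_le_of_card_ge hin2
    rw [hcard_rangeφ, hcard_kerδ]
  -- -1 in φ.range
  have hneg1 : (-1 : Kˣ) ∈ φ.range := by
    rw [hrange_eq, hkerδ]
    rw [Units.val_neg, Units.val_one, map_neg, map_one]
  obtain ⟨u₀, hu₀⟩ := hneg1
  -- bijection with solution set
  have hvalφ : ∀ w : Kˣ, ((φ w : Kˣ) : K) = (w : K) * σ (w : K) := by
    intro w
    rw [hφ, Units.val_mul, hσm]
  have hy0 : ∀ y : K, y * σ y = -1 → y ≠ 0 := by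
    intro y hy h0
    rw [h0, zero_mul] at hy
    exact (by simp : (0 : K) ≠ -1) hy
  have hmk0 : ∀ (y : K) (hy : y * σ y = -1), φ (Units.mk0 y (hy0 y hy)) = -1 := by
    intro y hy
    apply Units.ext
    rw [hvalφ]
    exact hy
  have E2 : φ.ker ≃ {y : K | y * σ y = -1} :=
    { toFun := fun v => ⟨((u₀ * v : Kˣ) : K), by
        show ((u₀ * (v : Kˣ) : Kˣ) : K) * σ _ = -1
        rw [← hvalφ, map_mul, v.2, mul_one, hu₀]
        simp⟩
      invFun := fun y => ⟨u₀⁻¹ * Units.mk0 y.1 (hy0 y.1 y.2), by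
        show φ _ = 1
        rw [map_mul, map_inv, hu₀, hmk0 y.1 y.2]
        simp⟩
      left_inv := fun v => by
        apply Subtype.ext
        apply Units.ext
        show ((u₀⁻¹ * Units.mk0 _ _ : Kˣ) : K) = ((v : Kˣ) : K)
        rw [Units.val_mul]
        simp
      right_inv := fun y => by
        apply Subtype.ext
        show ((u₀ * (u₀⁻¹ * Units.mk0 y.1 _) : Kˣ) : K) = y.1
        rw [← mul_assoc, mul_inv_cancel, one_mul]
        rfl }
  refine ⟨l, hl2, by rw [hKcard], ?_⟩
  rw [← Nat.card_congr E2, hcard_kerφ]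


namespace StmtAux

variable {F : Type} [Field F] {G : Type} [CommGroup G]

/-- `bar` as a ring hom. -/
noncomputable def barHom : MonoidAlgebra F G →+* MonoidAlgebra F G :=
  MonoidAlgebra.mapDomainRingHom F (invMonoidHom : G →* G)

lemma barHom_apply (a : MonoidAlgebra F G) : barHom a = bar a := rfl

lemma bar_mul (a b : MonoidAlgebra F G) : bar (a * b) = bar a * bar b := by
  rw [← barHom_apply, ← barHom_apply, ← barHom_apply, map_mul]

lemma bar_one : bar (1 : MonoidAlgebra F G) = 1 := by
  rw [← barHom_apply, map_one]

lemma bar_sub (a b : MonoidAlgebra F G) : bar (a - b) = bar a - bar b := by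
  rw [← barHom_apply, ← barHom_apply, ← barHom_apply, map_sub]

lemma bar_bar (a : MonoidAlgebra F G) : bar (bar a) = a := by
  unfold bar
  rw [MonoidAlgebra.coeff_ofCoeff, ← Finsupp.mapDomain_comp]
  simp [Function.comp_def, MonoidAlgebra.ofCoeff_coeff]

lemma bar_single (x : G) (c : F) :
    bar (MonoidAlgebra.single x c) = MonoidAlgebra.single x⁻¹ c := by
  unfold bar
  exact MonoidAlgebra.mapDomain_single (f := fun x : G => x⁻¹)

end StmtAux

end Helpers

set_option maxHeartbeats 2000000 in
set_option synthInstance.maxHeartbeats 400000 in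
/-- For a primitive idempotent `e` with `ē = e`, `e ≠ e₀` and `dim_F FGe = 2k`,
the number of `β ∈ FGe` with `β·β̄ = -e` equals `q^k + 1`. -/
theorem stmt_15 (F : Type) [Field F] [Fintype F] (G : Type) [CommGroup G] [Fintype G]
    (hn : 1 < Fintype.card G) (hodd : Odd (Fintype.card G))
    (hcop : Nat.Coprime (Fintype.card G) (Fintype.card F))
    (e : MonoidAlgebra F G) (he : IsPrimIdem e) (hbar : bar e = e)
    (hne : e ≠ eZero F G) (k : ℕ) (hk : fdim F (Ideal.span {e}) = 2 * k) :
    Nat.card {β : MonoidAlgebra F G |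
        β ∈ Ideal.span ({e} : Set (MonoidAlgebra F G)) ∧ β * bar β = -e} =
      Fintype.card F ^ k + 1 := by
  classical
  -- basic instances
  haveI hFin : Finite (MonoidAlgebra F G) := by
    exact Finite.of_equiv _ MonoidAlgebra.coeffEquiv.symm
  have hncast : ((Fintype.card G : ℕ) : F) ≠ 0 := by
    intro h
    set p := ringChar F with hpdef
    haveI : CharP F p := ringChar.charP F
    haveI hprime : Fact p.Prime := ⟨CharP.char_is_prime F p⟩
    have hdvd : p ∣ Fintype.card G := (CharP.cast_eq_zero_iff F p _).1 h
    obtain ⟨m', hm', hcard⟩ := FiniteField.card F p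
    have hdvd2 : p ∣ Fintype.card F := by
      rw [hcard]; exact dvd_pow_self p m'.pos.ne'
    have := Nat.Coprime.eq_one_of_dvd (Nat.Coprime.coprime_dvd_left hdvd hcop) hdvd2
    exact hprime.1.one_lt.ne' this
  haveI : NeZero ((Fintype.card G : F)) := ⟨hncast⟩
  haveI : NeZero ((Nat.card G : F)) := ⟨by rw [Nat.card_eq_fintype_card]; exact hncast⟩
  haveI : IsSemisimpleRing (MonoidAlgebra F G) := inferInstance
  haveI hred : IsReduced (MonoidAlgebra F G) := aux_reduced
  -- idempotent facts
  have hee : e * e = e := he.1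
  set I : Ideal (MonoidAlgebra F G) := Ideal.span {e} with hI
  set m : Ideal (MonoidAlgebra F G) := Ideal.span {1 - e} with hm
  have hmul_e : ∀ a ∈ m, a * e = 0 := by
    intro a ha
    obtain ⟨r, hr⟩ := Ideal.mem_span_singleton'.1 ha
    rw [← hr, mul_assoc, sub_mul, one_mul, hee, sub_self, mul_zero]
  have hsub_mem : ∀ a : MonoidAlgebra F G, a - a * e ∈ m := by
    intro a
    exact Ideal.mem_span_singleton'.2 ⟨a, by ring⟩
  have hIm : ∀ a : MonoidAlgebra F G, a ∈ I → a ∈ m → a = 0 := by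
    intro a haI ham
    obtain ⟨r, hr⟩ := Ideal.mem_span_singleton'.1 haI
    have : a * e = a := by rw [← hr, mul_assoc, hee]
    rw [← this, hmul_e a ham]
  have hne_top : m ≠ ⊤ := by
    intro h
    have h1 : (1 : MonoidAlgebra F G) ∈ m := h ▸ Submodule.mem_top
    have := hmul_e 1 h1
    rw [one_mul] at this
    exact he.2.1 this
  set K := MonoidAlgebra F G ⧸ m with hK
  haveI : Nontrivial K := Ideal.Quotient.nontrivial_iff.mpr hne_top
  haveI : Finite K := Finite.of_surjective _ Ideal.Quotient.mk_surjective
  set π : MonoidAlgebra F G →+* K := Ideal.Quotient.mk m with hπ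
  have hπsurj : Function.Surjective π := Ideal.Quotient.mk_surjective
  have hker : ∀ a : MonoidAlgebra F G, π a = 0 ↔ a ∈ m := fun a => Ideal.Quotient.eq_zero_iff_mem
  have hπe : π e = 1 := by
    have h1 : (1 : MonoidAlgebra F G) - e ∈ m := Ideal.subset_span rfl
    have h2 : π (1 - e) = 0 := (hker _).2 h1
    rw [map_sub, map_one, sub_eq_zero] at h2
    exact h2.symm
  -- K is reduced
  have hKred : IsReduced K := by
    constructor
    rintro y ⟨nn, hnn⟩
    obtain ⟨a, rfl⟩ := hπsurj y
    rcases Nat.eq_zero_or_pos nn with rfl | hpos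
    · rw [pow_zero] at hnn
      exact absurd hnn one_ne_zero
    have ham : a ^ nn ∈ m := by
      rw [← hker, map_pow, hnn]
    have h1 : (a * e) ^ nn = 0 := by
      rw [mul_pow]
      obtain ⟨n2, rfl⟩ : ∃ n2, nn = n2 + 1 := ⟨nn - 1, by omega⟩
      rw [aux_pow_idem he.1 n2]
      exact hmul_e _ ham
    have h2 : a * e = 0 := hred.eq_zero _ ⟨nn, h1⟩
    have ham2 : a ∈ m := by
      have := hsub_mem a
      rwa [h2, sub_zero] at this
    exact (hker a).2 ham2
  -- idempotents in K are trivial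
  have hKidem : ∀ y : K, y * y = y → y = 0 ∨ y = 1 := by
    intro y hy
    obtain ⟨a, rfl⟩ := hπsurj y
    have hπc : π (a * e) = π a := by
      rw [eq_comm, Ideal.Quotient.mk_eq_mk_iff_sub_mem]
      exact hsub_mem a
    have hce : (a * e) * e = a * e := by rw [mul_assoc, hee]
    have hc2 : (a * e) * (a * e) = a * e := by
      have h0 : π (a * a - a) = 0 := by rw [map_sub, map_mul, hy, sub_self]
      have h1 : (a * a - a) * e = 0 := hmul_e _ ((hker _).1 h0)
      have key : (a * e) * (a * e) = (a * a - a) * e * e + a * (e * e) := by ring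
      rw [key, h1, zero_mul, zero_add, hee]
    have horth : a * e = 0 ∨ e - a * e = 0 := by
      by_contra hcon
      push_neg at hcon
      apply he.2.2
      refine ⟨a * e, e - a * e, hc2, ?_, hcon.1, hcon.2, ?_, by ring⟩
      · show (e - a * e) * (e - a * e) = e - a * e
        have hkey : (e - a * e) * (e - a * e)
            = e * e - (a * e) * e - ((a * e) * e - (a * e) * (a * e)) := by ring
        rw [hkey, hee, hce, hc2]
        ring
      · show (a * e) * (e - a * e) = 0
        have hkey : (a * e) * (e - a * e) = (a * e) * e - (a * e) * (a * e) := by ring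
        rw [hkey, hce, hc2, sub_self]
    rcases horth with h0 | h0
    · left
      rw [← hπc, h0, map_zero]
    · right
      have h1 : a * e = e := by
        have := sub_eq_zero.1 h0
        exact this.symm
      rw [← hπc, h1, hπe]
  -- K is a field
  have hKfield : IsField K := aux_isField hKred hKidem
  letI : Field K := hKfield.toField
  -- F-dimension of K
  have hbij : Function.Bijective
      ((Ideal.Quotient.mkₐ F m).toLinearMap.comp (Submodule.restrictScalars F I).subtype) := by
    constructor
    · intro x y hxy
      apply Subtype.ext
      have : π x.1 - π y.1 = 0 := by
        rw [sub_eq_zero]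
        exact hxy
      rw [← map_sub, hker] at this
      have := hIm _ (Submodule.sub_mem _ x.2 y.2) this
      rw [sub_eq_zero] at this
      exact this
    · intro y
      obtain ⟨a, rfl⟩ := hπsurj y
      refine ⟨⟨a * e, Ideal.mem_span_singleton'.2 ⟨a, rfl⟩⟩, ?_⟩
      show π (a * e) = π a
      rw [Ideal.Quotient.mk_eq_mk_iff_sub_mem]
      have := hsub_mem a
      simpa using (Submodule.neg_mem _ this)
  have hfr : Module.finrank F K = 2 * k := by
    rw [← (LinearEquiv.ofBijective _ hbij).finrank_eq]
    exact hk
  haveI : Fintype K := Fintype.ofFinite K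
  have hcardK : Nat.card K = Fintype.card F ^ (2 * k) := by
    rw [Nat.card_eq_fintype_card, Module.card_eq_pow_finrank (K := F) (V := K), hfr]
  -- the induced bar automorphism on K
  have hbar_m : ∀ a ∈ m, (StmtAux.barHom a) ∈ m := by
    intro a ha
    obtain ⟨r, hr⟩ := Ideal.mem_span_singleton'.1 ha
    rw [← hr]
    rw [StmtAux.barHom_apply, StmtAux.bar_mul, StmtAux.bar_sub, StmtAux.bar_one, hbar]
    exact Ideal.mul_mem_left _ _ (Ideal.subset_span rfl)
  set σ : K →+* K := Ideal.Quotient.lift m (π.comp StmtAux.barHom)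
    (fun a ha => (hker _).2 (hbar_m a ha)) with hσdef
  have hσπ : ∀ a : MonoidAlgebra F G, σ (π a) = π (bar a) := by
    intro a
    rw [hσdef]
    show Ideal.Quotient.lift m _ _ (Ideal.Quotient.mk m a) = _
    rw [Ideal.Quotient.lift_mk]
    show π (StmtAux.barHom a) = π (bar a)
    rw [StmtAux.barHom_apply]
  have hσ2 : ∀ y : K, σ (σ y) = y := by
    intro y
    obtain ⟨a, rfl⟩ := hπsurj y
    rw [hσπ, hσπ, StmtAux.bar_bar]
  -- σ is not the identity
  have hσne : ∃ y : K, σ y ≠ y := by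
    by_contra hcon
    push_neg at hcon
    apply hne
    -- every bar a ≡ a mod m, hence (bar a) * e = a * e
    have hbare : ∀ a : MonoidAlgebra F G, bar a * e = a * e := by
      intro a
      have h1 : π (bar a) = π a := by rw [← hσπ, hcon]
      have h2 : bar a - a ∈ m := by
        rw [← hker, map_sub, h1, sub_self]
      have h3 := hmul_e _ h2
      rw [sub_mul, sub_eq_zero] at h3
      exact h3
    -- hence e = single (x*x) 1 * e for every x
    have hsq : ∀ x : G, MonoidAlgebra.single (x * x) (1 : F) * e = e := by
      intro x
      have h1 := hbare (MonoidAlgebra.single x (1 : F))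
      rw [StmtAux.bar_single] at h1
      have h2 := congrArg (fun z => MonoidAlgebra.single x (1 : F) * z) h1
      rw [← mul_assoc, ← mul_assoc, MonoidAlgebra.single_mul_single,
        MonoidAlgebra.single_mul_single, mul_inv_cancel, one_mul] at h2
      rw [← h2, ← MonoidAlgebra.one_def, one_mul]
    -- squaring is surjective on G
    have hcop2 : (Nat.card G).Coprime 2 := by
      have : ¬ (2 ∣ Nat.card G) := by
        rw [Nat.card_eq_fintype_card]
        have h2 := Nat.odd_iff.1 hodd
        omega
      rw [Nat.coprime_comm]
      exact (Nat.prime_two.coprime_iff_not_dvd).2 this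
    have hsurj_sq : ∀ y : G, ∃ x : G, x * x = y := by
      intro y
      obtain ⟨x, hx⟩ := (powCoprime hcop2).surjective y
      exact ⟨x, by rw [← sq]; exact hx⟩
    have hall : ∀ y : G, MonoidAlgebra.single y (1 : F) * e = e := by
      intro y
      obtain ⟨x, rfl⟩ := hsurj_sq y
      exact hsq x
    -- hence the coefficients of e are constant
    have hconst : ∀ g : G, e.coeff g = e.coeff 1 := by
      intro g
      have h1 := congrArg (fun z : MonoidAlgebra F G => z.coeff g) (hall g)
      rw [MonoidAlgebra.coeff_single_mul_apply] at h1
      rw [← h1, inv_mul_cancel, one_mul]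
    -- so e = (e 1) • ∑ x, single x 1
    set c : F := e.coeff 1 with hc
    set sU : MonoidAlgebra F G := ∑ x : G, MonoidAlgebra.single x (1 : F) with hsU
    have hsU_apply : ∀ g : G, sU.coeff g = 1 := by
      intro g
      rw [hsU]
      rw [MonoidAlgebra.coeff_sum, Finset.sum_apply']
      rw [Finset.sum_eq_single g]
      · simp [MonoidAlgebra.coeff_single]
      · intro b _ hb
        simp [MonoidAlgebra.coeff_single, Finsupp.single_apply, hb]
      · intro h
        exact absurd (Finset.mem_univ g) h
    have he_eq : e = c • sU := by
      ext g
      rw [MonoidAlgebra.coeff_smul, Finsupp.smul_apply, hsU_apply, smul_eq_mul, mul_one]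
      exact hconst g
    -- sU * sU = n • sU
    have hsingle_sU : ∀ x : G, MonoidAlgebra.single x (1 : F) * sU = sU := by
      intro x
      rw [hsU, Finset.mul_sum]
      have h1 : ∀ y : G, MonoidAlgebra.single x (1 : F) * MonoidAlgebra.single y (1 : F)
          = MonoidAlgebra.single (x * y) (1 : F) := by
        intro y
        rw [MonoidAlgebra.single_mul_single, one_mul]
      rw [Finset.sum_congr rfl (fun y _ => h1 y)]
      exact Fintype.sum_equiv (Equiv.mulLeft x)
        (fun y => MonoidAlgebra.single (x * y) (1 : F))
        (fun z => MonoidAlgebra.single z (1 : F)) (fun y => rfl)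
    have hsU_sq : sU * sU = ((Fintype.card G : ℕ) : F) • sU := by
      nth_rewrite 1 [hsU]
      rw [Finset.sum_mul]
      rw [Finset.sum_congr rfl (fun x _ => hsingle_sU x)]
      rw [Finset.sum_const, Finset.card_univ]
      rw [(Nat.cast_smul_eq_nsmul F _ _).symm]
    -- idempotency gives c * n = 1
    have hc0 : c ≠ 0 := by
      intro h0
      apply he.2.1
      rw [he_eq, h0, zero_smul]
    have h1 : (c * c * ((Fintype.card G : ℕ) : F)) • sU = c • sU := by
      have h2 : e * e = e := hee
      rw [he_eq, smul_mul_smul_comm, hsU_sq, smul_smul] at h2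
      exact h2
    have hsU0 : sU ≠ 0 := by
      intro h0
      have := hsU_apply 1
      rw [h0] at this
      simpa using this
    have h5 : c * c * ((Fintype.card G : ℕ) : F) - c = 0 := by
      have h3 : (c * c * ((Fintype.card G : ℕ) : F) - c) • sU = 0 := by
        rw [sub_smul, h1, sub_self]
      exact (smul_eq_zero.1 h3).resolve_right hsU0
    have hcn : c * ((Fintype.card G : ℕ) : F) = 1 := by
      have h6 : c * (c * ((Fintype.card G : ℕ) : F)) = c * 1 := by
        rw [mul_one]
        rw [sub_eq_zero] at h5
        calc c * (c * ((Fintype.card G : ℕ) : F))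
            = c * c * ((Fintype.card G : ℕ) : F) := by ring
          _ = c := h5
      exact mul_left_cancel₀ hc0 h6
    have : c = ((Fintype.card G : ℕ) : F)⁻¹ :=
      eq_inv_of_mul_eq_one_left (by linear_combination hcn)
    rw [he_eq, this]
    rfl
  -- the set bijection
  have hmem_neg_e : -e ∈ I := Submodule.neg_mem _ (Ideal.subset_span rfl)
  set S := {β : MonoidAlgebra F G | β ∈ I ∧ β * bar β = -e} with hS
  set T := {y : K | y * σ y = -1} with hT
  have hto : ∀ β : S, (π (β : MonoidAlgebra F G)) * σ (π (β : MonoidAlgebra F G)) = -1 := by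
    rintro ⟨β, hβI, hβ⟩
    show π β * σ (π β) = -1
    rw [hσπ, ← map_mul, hβ, map_neg, hπe]
  have htobij : Function.Bijective (fun β : S => (⟨π (β : MonoidAlgebra F G), hto β⟩ : T)) := by
    constructor
    · rintro ⟨β, hβ⟩ ⟨β', hβ'⟩ hππ
      apply Subtype.ext
      have h1 : π β = π β' := congrArg Subtype.val hππ
      have h2 : β - β' ∈ m := by rw [← hker, map_sub, h1, sub_self]
      have := hIm _ (Submodule.sub_mem _ hβ.1 hβ'.1) h2
      rwa [sub_eq_zero] at this
    · rintro ⟨y, hy⟩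
      obtain ⟨a, rfl⟩ := hπsurj y
      have hβI : a * e ∈ I := Ideal.mem_span_singleton'.2 ⟨a, rfl⟩
      have hπae : π (a * e) = π a := by
        rw [Ideal.Quotient.mk_eq_mk_iff_sub_mem]
        have := hsub_mem a
        simpa using (Submodule.neg_mem _ this)
      have hbar_ae : bar (a * e) = bar a * e := by
        rw [StmtAux.bar_mul, hbar]
      have hprod_mem : a * e * bar (a * e) + e ∈ I := by
        rw [hbar_ae]
        refine Submodule.add_mem _ ?_ (Ideal.subset_span rfl)
        exact Ideal.mem_span_singleton'.2 ⟨a * e * bar a, by ring⟩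
      have hprod_m : a * e * bar (a * e) + e ∈ m := by
        rw [← hker, map_add, map_mul, ← hσπ (a * e), hπae, hπe]
        have hy' : π a * σ (π a) = -1 := hy
        rw [hy']
        ring
      have : a * e * bar (a * e) + e = 0 := hIm _ hprod_mem hprod_m
      have hsol : a * e * bar (a * e) = -e := by linear_combination this
      exact ⟨⟨a * e, hβI, hsol⟩, Subtype.ext hπae⟩
  -- apply the core counting lemma
  obtain ⟨l, hl2, hlsq, hlcount⟩ := core_count σ hσ2 (by
    obtain ⟨y, hy⟩ := hσne
    exact ⟨y, hy⟩)
  have hlval : l = Fintype.card F ^ k := by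
    have h1 : l ^ 2 = (Fintype.card F ^ k) ^ 2 := by
      rw [hlsq, hcardK, ← pow_mul, mul_comm k 2]
    exact Nat.pow_left_injective (by norm_num) h1
  calc Nat.card S = Nat.card T := Nat.card_eq_of_bijective _ htobij
    _ = l + 1 := hlcount
    _ = Fintype.card F ^ k + 1 := by rw [hlval]


end
end

section
/- Let q ≥ 2 be an integer, let m ≥ 1, and let k_1, …, k_m be integers with k_i ≥ log_q(m) (equivalently q^{k_i} ≥ m) for each i = 1, …, m. Then (q^{k_1} + 1)(q^{k_2} + 1)⋯(q^{k_m} + 1) ≤ q^{k_1 + k_2 + ⋯ + k_m + 2}. -/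
/-- Let `q ≥ 2`, `m ≥ 1`, and `k₁, …, k_m` be integers with `q^{kᵢ} ≥ m` for
each `i`. Then `(q^{k₁}+1)⋯(q^{k_m}+1) ≤ q^{k₁+⋯+k_m+2}`. -/
theorem stmt_17 (q m : ℕ) (hq : 2 ≤ q) (hm : 1 ≤ m) (k : Fin m → ℕ)
    (hk : ∀ i, m ≤ q ^ (k i)) :
    ∏ i, (q ^ (k i) + 1) ≤ q ^ (∑ i, k i + 2) := by
  have hm0 : (0:ℝ) < m := by exact_mod_cast hm
  have hq0 : (0:ℝ) < q := by positivity
  -- work over ℝ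
  rw [← Nat.cast_le (α := ℝ)]
  push_cast
  have key : ∀ i ∈ Finset.univ, ((q:ℝ) ^ (k i) + 1) ≤ (q:ℝ) ^ (k i) * (1 + 1/m) := by
    intro i _
    have h : (m:ℝ) ≤ (q:ℝ) ^ (k i) := by exact_mod_cast hk i
    have : (1:ℝ) ≤ (q:ℝ) ^ (k i) * (1/m) := by
      rw [mul_one_div, le_div_iff₀ hm0, one_mul]; exact h
    nlinarith
  have h1 : (∏ i, ((q:ℝ) ^ (k i) + 1)) ≤ ∏ i : Fin m, (q:ℝ)^(k i) * (1+1/m) :=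
    Finset.prod_le_prod (fun i _ => by positivity) key
  rw [Finset.prod_mul_distrib, Finset.prod_const, Finset.card_univ, Fintype.card_fin,
    Finset.prod_pow_eq_pow_sum] at h1
  have h2 : (1 + 1/(m:ℝ))^m ≤ Real.exp 1 := by
    have := Real.add_one_le_exp (1/(m:ℝ))
    calc (1 + 1/(m:ℝ))^m ≤ (Real.exp (1/m))^m := by
          apply pow_le_pow_left₀ (by positivity)
          linarith
      _ = Real.exp 1 := by
          rw [← Real.exp_nat_mul]
          congr 1
          field_simp
  have h3 : Real.exp 1 ≤ 4 := by
    have := Real.exp_one_lt_d9; linarith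
  have hq4 : (4:ℝ) ≤ (q:ℝ)^2 := by
    have : (2:ℝ) ≤ q := by exact_mod_cast hq
    nlinarith
  calc (∏ i, ((q:ℝ) ^ (k i) + 1))
      ≤ (q:ℝ)^(∑ i, k i) * (1+1/m)^m := h1
    _ ≤ (q:ℝ)^(∑ i, k i) * 4 := by
        have := h2.trans h3
        apply mul_le_mul_of_nonneg_left this (by positivity)
    _ ≤ (q:ℝ)^(∑ i, k i) * (q:ℝ)^2 := by
        apply mul_le_mul_of_nonneg_left hq4 (by positivity)
    _ = (q:ℝ)^(∑ i, k i + 2) := by rw [pow_add]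
end
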